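/- Let H : ℝ → Matrix (Fin 2) (Fin 2) ℂ be a family of 2 × 2 complex matrices each of whose entries is differentiable at 0, and define the discriminant d(r) = (H₁₁(r) − H₂₂(r))² + 4·H₁₂(r)·H₂₁(r). Suppose d(0) = 0 and d'(0) ≠ 0. Then any two eigenvalues λ(r), μ(r) of H(r) satisfy |λ(r) − μ(r)|² = |d(r)|, and consequently |λ(r) − μ(r)| / √|r| → √|d'(0)| as r → 0; in particular the eigenvalue gap behaves like a square root of the distance from the degeneracy and is not differentiable at r = 0. -/

import Mathlib

open Polynomial Filter

/-- Square-root behaviour at a defective degeneracy in the two-state model: if the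
discriminant `d(r) = (H₁₁−H₂₂)² + 4·H₁₂·H₂₁` vanishes to first order at `r = 0`
(`d(0) = 0`, `d'(0) ≠ 0`), then the gap between the two eigenvalues of `H(r)` satisfies
`|λ(r) − μ(r)|² = |d(r)|`, behaves like `√|d'(0)|·√|r|` as `r → 0`, and in particular
is not differentiable at `r = 0`. -/
theorem defective_degeneracy_square_root_gap
    (H : ℝ → Matrix (Fin 2) (Fin 2) ℂ)
    (hdiff : ∀ i j, DifferentiableAt ℝ (fun r => H r i j) 0)
    (d : ℝ → ℂ)
    (hd : ∀ r, d r = (H r 0 0 - H r 1 1) ^ 2 + 4 * H r 0 1 * H r 1 0)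
    (hd0 : d 0 = 0) (hd' : deriv d 0 ≠ 0)
    (lam mu : ℝ → ℂ)
    (hroots : ∀ r, (H r).charpoly = (X - C (lam r)) * (X - C (mu r))) :
    (∀ r : ℝ, ‖lam r - mu r‖ ^ 2 = ‖d r‖) ∧
    Tendsto (fun r => ‖lam r - mu r‖ / Real.sqrt |r|)
      (nhdsWithin 0 {(0 : ℝ)}ᶜ) (nhds (Real.sqrt (‖deriv d 0‖))) ∧
    ¬ DifferentiableAt ℝ (fun r => ‖lam r - mu r‖) 0 := by
  -- Key algebraic identity
  have key : ∀ r, (lam r - mu r) ^ 2 = d r := by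
    intro r
    have h := hroots r
    have hrw : (X - C (lam r)) * (X - C (mu r))
        = X ^ 2 - (C (lam r) + C (mu r)) * X + C (lam r) * C (mu r) := by ring
    rw [hrw] at h
    have htr := Matrix.trace_eq_neg_charpoly_coeff (H r)
    have hdet := Matrix.det_eq_sign_charpoly_coeff (H r)
    rw [h] at htr hdet
    simp [coeff_one, coeff_X, Fintype.card_fin] at htr hdet
    rw [Matrix.trace_fin_two] at htr
    rw [Matrix.det_fin_two] at hdet
    rw [hd r]
    linear_combination (-(lam r + mu r + H r 0 0 + H r 1 1)) * htr + 4 * hdet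
  have part1 : ∀ r : ℝ, ‖lam r - mu r‖ ^ 2 = ‖d r‖ := by
    intro r
    rw [← key r, norm_pow]
  -- differentiability of d
  have hddiff : DifferentiableAt ℝ d 0 := by
    have : DifferentiableAt ℝ
        (fun r => (H r 0 0 - H r 1 1) ^ 2 + 4 * H r 0 1 * H r 1 0) 0 := by
      have h00 := hdiff 0 0; have h11 := hdiff 1 1
      have h01 := hdiff 0 1; have h10 := hdiff 1 0
      fun_prop
    exact this.congr_of_eventuallyEq (by filter_upwards with r using (hd r))
  have hder : HasDerivAt d (deriv d 0) 0 := hddiff.hasDerivAt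
  rw [hasDerivAt_iff_tendsto_slope] at hder
  -- |r|⁻¹ * |d r| → |d'(0)|
  have hL : Tendsto (fun r : ℝ => |r|⁻¹ * ‖d r‖) (nhdsWithin 0 {(0:ℝ)}ᶜ)
      (nhds (‖deriv d 0‖)) := by
    have := (continuous_norm.tendsto (deriv d 0)).comp hder
    refine this.congr (fun r => ?_)
    simp [slope, hd0, norm_smul, abs_inv]
  -- the normalized gap equals sqrt (|r|⁻¹ * |d r|) away from 0
  have heq : ∀ r : ℝ, r ≠ 0 →
      ‖lam r - mu r‖ / Real.sqrt |r|
        = Real.sqrt (|r|⁻¹ * ‖d r‖) := by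
    intro r hr
    have h1 : ‖lam r - mu r‖ = Real.sqrt (‖d r‖) := by
      rw [← part1 r, Real.sqrt_sq (norm_nonneg _)]
    rw [h1, ← Real.sqrt_div (norm_nonneg _), div_eq_inv_mul]
  have part2 : Tendsto (fun r => ‖lam r - mu r‖ / Real.sqrt |r|)
      (nhdsWithin 0 {(0 : ℝ)}ᶜ) (nhds (Real.sqrt (‖deriv d 0‖))) := by
    have := (Real.continuous_sqrt.tendsto _).comp hL
    refine this.congr' ?_
    filter_upwards [self_mem_nhdsWithin] with r hr
    exact (heq r hr).symm
  refine ⟨part1, part2, ?_⟩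
  -- non-differentiability
  intro hdf
  set f := fun r => ‖lam r - mu r‖ with hf
  have hf0 : f 0 = 0 := by
    have := part1 0
    rw [hd0, norm_zero, pow_eq_zero_iff (n := 2) (by norm_num)] at this
    exact this
  have hslope : Tendsto (slope f 0) (nhdsWithin 0 {(0:ℝ)}ᶜ)
      (nhds (deriv f 0)) := by
    rw [← hasDerivAt_iff_tendsto_slope]
    exact hdf.hasDerivAt
  have hsmall : Tendsto (fun r : ℝ => r / Real.sqrt |r|) (nhdsWithin 0 {(0:ℝ)}ᶜ)
      (nhds 0) := by
    have hsq : Tendsto (fun r : ℝ => Real.sqrt |r|) (nhdsWithin 0 {(0:ℝ)}ᶜ) (nhds 0) := by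
      have : ContinuousAt (fun r : ℝ => Real.sqrt |r|) 0 := by fun_prop
      have h2 := this.tendsto.mono_left (nhdsWithin_le_nhds (s := {(0:ℝ)}ᶜ))
      simpa using h2
    refine squeeze_zero_norm' ?_ hsq
    filter_upwards [self_mem_nhdsWithin] with r hr
    have hrpos : 0 < |r| := abs_pos.mpr hr
    rw [Real.norm_eq_abs, abs_div, abs_of_nonneg (Real.sqrt_nonneg _), Real.div_sqrt]
  have hzero : Tendsto (fun r => ‖lam r - mu r‖ / Real.sqrt |r|)
      (nhdsWithin 0 {(0:ℝ)}ᶜ) (nhds 0) := by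
    have := hslope.mul hsmall
    rw [mul_zero] at this
    refine this.congr' ?_
    filter_upwards [self_mem_nhdsWithin] with r hr
    have hr' : (r : ℝ) ≠ 0 := hr
    field_simp [slope, hf0]
    rw [slope_def_field, hf0, sub_zero, sub_zero, div_mul_cancel₀ _ hr']
  have huniq := tendsto_nhds_unique part2 hzero
  have habs : ‖deriv d 0‖ = 0 :=
    le_antisymm (Real.sqrt_eq_zero'.mp huniq) (norm_nonneg _)
  exact hd' (by simpa using habs)
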